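/- Let r₁ = 2^{R̂₁} − 1 and r'₁ = 2^{2R̂₁} − 1 with R̂₁ > 0, and suppose 0 < r₁ < α₁/α₂ with α₁ + α₂ = 1, α₁, α₂ ∈ (0,1). Then 1 − exp(−r₁/((α₁ − α₂r₁)ρ·λ)) < 1 − exp(−r'₁/(ρ·λ)) for all ρ, λ > 0 if and only if α₁/α₂ > 2^{R̂₁}. -/
import Mathlib


open Real

lemma exp_step (A B : ℝ) : 1 - Real.exp (-A) < 1 - Real.exp (-B) ↔ A < B := by
  rw [sub_lt_sub_iff_left, Real.exp_lt_exp, neg_lt_neg_iff]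

/-- The single-round NOMA outage probability of user 1 is below the OMA one for
all ρ, lam > 0 iff α₁/α₂ > 2^{R̂₁}. -/
theorem noma_vs_oma_user1
    (α₁ α₂ R₁ : ℝ) (hα₁ : 0 < α₁ ∧ α₁ < 1) (hα₂ : 0 < α₂ ∧ α₂ < 1)
    (hsum : α₁ + α₂ = 1) (hR : 0 < R₁)
    (hr : 0 < (2 : ℝ) ^ R₁ - 1 ∧ (2 : ℝ) ^ R₁ - 1 < α₁ / α₂) :
    (∀ ρ lam : ℝ, 0 < ρ → 0 < lam →
        1 - Real.exp (-((2 : ℝ) ^ R₁ - 1) / ((α₁ - α₂ * ((2 : ℝ) ^ R₁ - 1)) * ρ * lam))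
          < 1 - Real.exp (-((2 : ℝ) ^ (2 * R₁) - 1) / (ρ * lam)))
      ↔ α₁ / α₂ > (2 : ℝ) ^ R₁ := by
  obtain ⟨hα₁0, hα₁1⟩ := hα₁
  obtain ⟨hα₂0, hα₂1⟩ := hα₂
  obtain ⟨hr0, hr1⟩ := hr
  set t : ℝ := (2:ℝ) ^ R₁ with ht
  have hD : 0 < α₁ - α₂ * (t - 1) := by
    have := (lt_div_iff₀ hα₂0).mp hr1
    nlinarith
  have h2 : (2:ℝ) ^ (2 * R₁) = t * t := by
    rw [two_mul, Real.rpow_add (by norm_num : (0:ℝ) < 2)]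
  have hcond : (t - 1) / (α₁ - α₂ * (t - 1)) < t * t - 1 ↔ t < α₁ / α₂ := by
    rw [div_lt_iff₀ hD, lt_div_iff₀ hα₂0]
    constructor
    · intro h
      nlinarith [mul_pos hr0 hα₂0, sq_nonneg (t - 1)]
    · intro h
      nlinarith [mul_pos hr0 hα₂0, mul_pos hr0 (sub_pos.mpr h)]
  constructor
  · intro h
    have h1 := h 1 1 one_pos one_pos
    rw [h2] at h1; simp only [neg_div] at h1; rw [exp_step] at h1
    simp only [mul_one, div_one] at h1
    exact hcond.mp h1
  · intro h ρ lam hρ hlam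
    have hc : 0 < ρ * lam := mul_pos hρ hlam
    rw [h2]; simp only [neg_div]; rw [exp_step]
    have key : (t - 1) / (α₁ - α₂ * (t - 1)) < t * t - 1 := hcond.mpr h
    calc (t - 1) / ((α₁ - α₂ * (t - 1)) * ρ * lam)
        = ((t - 1) / (α₁ - α₂ * (t - 1))) / (ρ * lam) := by
          rw [div_div, mul_assoc]
      _ < (t * t - 1) / (ρ * lam) := by
          gcongr
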